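/- In the negative definite E8 lattice, the number of roots orthogonal to both v_1 = (1,-1,0,0,0,0,0,0) and v_2 = (0,1,1,2,0,0,0,0) is exactly 40; specifically they are the vectors δ_{±i,±j} with i,j ≥ 5 (24 vectors) and the vectors ±δ'_S with all entries ±1/2, sign pattern determined by a subset S of even cardinality with 1,2,3 ∈ S and 4 ∉ S (16 vectors). -/
import Mathlib


/-- The `E₈` lattice: vectors in `ℚ⁸` with all coordinates integers or all
in `ℤ + 1/2`, and coordinate sum in `2ℤ`. -/
def IsE8 (x : Fin 8 → ℚ) : Prop :=
  ((∀ i, ∃ n : ℤ, x i = n) ∨ (∀ i, ∃ n : ℤ, x i = n + 1/2)) ∧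
    ∃ m : ℤ, (∑ i, x i) = 2 * m

/-- The (negative definite) bilinear form on the `E₈` model. -/
def e8bil (x y : Fin 8 → ℚ) : ℚ := -(∑ i, x i * y i)

/-- A root of `E₈` is a lattice vector of norm `-2`. -/
def IsE8Root (x : Fin 8 → ℚ) : Prop := IsE8 x ∧ e8bil x x = -2

/-- The `δ_{±i,±j}` with (1-based) `i, j ≥ 5`, i.e. supported in the last four
coordinates. -/
def deltaTail : Set (Fin 8 → ℚ) :=
  {x | ∃ j k : Fin 8, 4 ≤ (j : ℕ) ∧ 4 ≤ (k : ℕ) ∧ j ≠ k ∧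
    (x j = 1 ∨ x j = -1) ∧ (x k = 1 ∨ x k = -1) ∧ ∀ i, i ≠ j → i ≠ k → x i = 0}

/-- The vectors `±δ'_S` with all entries `±1/2`, an even number of `+1/2`
entries, with first three entries equal and the fourth entry opposite
(i.e. `1,2,3 ∈ S`, `4 ∉ S`, up to global sign). -/
def halfSpecial : Set (Fin 8 → ℚ) :=
  {x | (∀ i, x i = 1/2 ∨ x i = -1/2) ∧
    Even (Finset.univ.filter fun i => x i = 1/2).card ∧
    x 0 = x 1 ∧ x 1 = x 2 ∧ x 3 = -x 0}

/-! ### Auxiliary machinery -/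

section Aux

/-- building block for `deltaTail` elements -/
def dvec (j k : Fin 8) (s t : Bool) : Fin 8 → ℚ :=
  fun i => if i = j then (if s then 1 else -1) else if i = k then (if t then 1 else -1) else 0

def F1 : Finset (Fin 8 → ℚ) :=
  (Finset.univ.filter fun p : Fin 8 × Fin 8 × Bool × Bool => 4 ≤ p.1.val ∧ p.1 < p.2.1).image
    fun p => dvec p.1 p.2.1 p.2.2.1 p.2.2.2

lemma F1card : F1.card = 24 := by decide

/-- building block for `halfSpecial` elements -/
def bvec (b : Fin 8 → Bool) : Fin 8 → ℚ := fun i => if b i then 1/2 else -1/2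

def G2 : Finset (Fin 8 → Bool) :=
  Finset.univ.filter fun b => Even (Finset.univ.filter fun i => b i = true).card ∧
    b 0 = b 1 ∧ b 1 = b 2 ∧ b 3 = !b 0

def F2 : Finset (Fin 8 → ℚ) := G2.image bvec

lemma bvec_inj : Function.Injective bvec := by
  intro a b h
  funext i
  have h' := congrFun h i
  simp only [bvec] at h'
  cases ha : a i <;> cases hb : b i <;> rw [ha, hb] at h' <;> norm_num at h' <;> rfl

lemma F2card : F2.card = 16 := by
  rw [F2, Finset.card_image_of_injective _ bvec_inj]
  decide

lemma mem_F1 (j k : Fin 8) (s t : Bool) (hj : 4 ≤ j.val) (hjk : j < k) :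
    dvec j k s t ∈ F1 := by
  rw [F1, Finset.mem_image]
  exact ⟨(j, k, s, t), Finset.mem_filter.2 ⟨Finset.mem_univ _, hj, hjk⟩, rfl⟩

lemma eq_dvec (x : Fin 8 → ℚ) (j k : Fin 8) (s t : Bool) (hkj : k ≠ j)
    (hxj : x j = if s then 1 else -1) (hxk : x k = if t then 1 else -1)
    (h0 : ∀ i, i ≠ j → i ≠ k → x i = 0) : x = dvec j k s t := by
  funext i
  by_cases hij : i = j
  · subst hij; simp [dvec, hxj]
  · by_cases hik : i = k
    · subst hik; simp [dvec, hkj, hxk]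
    · simp [dvec, hij, hik, h0 i hij hik]

lemma deltaTail_eq : deltaTail = ↑F1 := by
  ext x
  constructor
  · rintro ⟨j, k, hj, hk, hjk, hxj, hxk, h0⟩
    rw [Finset.mem_coe]
    rcases lt_or_gt_of_ne hjk with hlt | hgt
    · rcases hxj with h1 | h1 <;> rcases hxk with h2 | h2
      · rw [eq_dvec x j k true true (Ne.symm hjk) (by simpa using h1) (by simpa using h2) h0]
        exact mem_F1 j k true true hj hlt
      · rw [eq_dvec x j k true false (Ne.symm hjk) (by simpa using h1) (by simpa using h2) h0]
        exact mem_F1 j k true false hj hlt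
      · rw [eq_dvec x j k false true (Ne.symm hjk) (by simpa using h1) (by simpa using h2) h0]
        exact mem_F1 j k false true hj hlt
      · rw [eq_dvec x j k false false (Ne.symm hjk) (by simpa using h1) (by simpa using h2) h0]
        exact mem_F1 j k false false hj hlt
    · have h0' : ∀ i, i ≠ k → i ≠ j → x i = 0 := fun i h h' => h0 i h' h
      rcases hxk with h1 | h1 <;> rcases hxj with h2 | h2
      · rw [eq_dvec x k j true true hjk (by simpa using h1) (by simpa using h2) h0']
        exact mem_F1 k j true true hk hgt
      · rw [eq_dvec x k j true false hjk (by simpa using h1) (by simpa using h2) h0']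
        exact mem_F1 k j true false hk hgt
      · rw [eq_dvec x k j false true hjk (by simpa using h1) (by simpa using h2) h0']
        exact mem_F1 k j false true hk hgt
      · rw [eq_dvec x k j false false hjk (by simpa using h1) (by simpa using h2) h0']
        exact mem_F1 k j false false hk hgt
  · intro hx
    rw [Finset.mem_coe, F1, Finset.mem_image] at hx
    obtain ⟨p, hp, rfl⟩ := hx
    obtain ⟨-, hj, hjk⟩ := Finset.mem_filter.1 hp
    have hjk' : p.1 ≠ p.2.1 := ne_of_lt hjk
    have hk : 4 ≤ (p.2.1 : ℕ) := by
      have := (Fin.lt_def).1 hjk; omega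
    refine ⟨p.1, p.2.1, hj, hk, hjk', ?_, ?_, ?_⟩
    · cases p.2.2.1 <;> simp [dvec]
    · cases p.2.2.2 <;> simp [dvec, Ne.symm hjk']
    · intro i hij hik
      simp [dvec, hij, hik]

lemma halfSpecial_eq : halfSpecial = ↑F2 := by
  ext x
  constructor
  · rintro ⟨hv, heven, h01, h12, h30⟩
    rw [Finset.mem_coe, F2, Finset.mem_image]
    refine ⟨fun i => decide (x i = 1/2), ?_, ?_⟩
    · rw [G2, Finset.mem_filter]
      refine ⟨Finset.mem_univ _, ?_, by simp [h01], by simp [h12], ?_⟩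
      · have hfe : (Finset.univ.filter fun i => decide (x i = 1/2) = true)
            = Finset.univ.filter fun i => x i = 1/2 := by
          apply Finset.filter_congr
          intro i _
          simp
        rw [hfe]; exact heven
      · show decide (x 3 = 1/2) = !decide (x 0 = 1/2)
        rcases hv 0 with h | h
        · rw [decide_eq_true h, decide_eq_false (show ¬ x 3 = 1/2 by rw [h30, h]; norm_num)]
          rfl
        · rw [decide_eq_false (show ¬ x 0 = 1/2 by rw [h]; norm_num),
            decide_eq_true (show x 3 = 1/2 by rw [h30, h]; norm_num)]
          rfl
    · funext i
      show bvec (fun i => decide (x i = 1/2)) i = x i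
      simp only [bvec]
      rcases hv i with h | h
      · simp [h]
      · simp [h]
        norm_num
  · intro hx
    rw [Finset.mem_coe, F2, Finset.mem_image] at hx
    obtain ⟨b, hb, rfl⟩ := hx
    obtain ⟨-, heven, h01, h12, h30⟩ := Finset.mem_filter.1 hb
    refine ⟨fun i => ?_, ?_, ?_, ?_, ?_⟩
    · cases hbi : b i <;> simp [bvec, hbi]
    · have hfe : (Finset.univ.filter fun i => bvec b i = 1/2)
          = Finset.univ.filter fun i => b i = true := by
        apply Finset.filter_congr
        intro i _
        cases hbi : b i <;> simp [bvec, hbi] <;> norm_num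
      rw [hfe]; exact heven
    · simp [bvec, h01]
    · simp [bvec, h12]
    · cases hb0 : b 0
      · have hb3 : b 3 = true := by rw [h30, hb0]; rfl
        norm_num [bvec, hb3, hb0]
      · have hb3 : b 3 = false := by rw [h30, hb0]; rfl
        norm_num [bvec, hb3, hb0]

/-- value facts about the two fixed vectors -/
lemma v1_tail : ∀ i : Fin 8, 4 ≤ i.val → (![1, -1, 0, 0, 0, 0, 0, 0] : Fin 8 → ℚ) i = 0 := by
  decide

lemma v2_tail : ∀ i : Fin 8, 4 ≤ i.val → (![0, 1, 1, 2, 0, 0, 0, 0] : Fin 8 → ℚ) i = 0 := by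
  decide

lemma sum_half (x : Fin 8 → ℚ) (hv : ∀ i, x i = 1/2 ∨ x i = -1/2) :
    ∑ i, x i = ((Finset.univ.filter fun i => x i = 1/2).card : ℚ) - 4 := by
  classical
  rw [← Finset.sum_filter_add_sum_filter_not Finset.univ (fun i => x i = 1/2) x]
  have hA : ∑ i ∈ Finset.univ.filter (fun i => x i = 1/2), x i
      = ((Finset.univ.filter fun i => x i = 1/2).card : ℚ) * (1/2) := by
    rw [Finset.sum_congr rfl fun i hi => (Finset.mem_filter.1 hi).2, Finset.sum_const,
      nsmul_eq_mul]
  have hB : ∑ i ∈ Finset.univ.filter (fun i => ¬ x i = 1/2), x i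
      = ((Finset.univ.filter fun i => ¬ x i = 1/2).card : ℚ) * (-(1/2)) := by
    rw [Finset.sum_congr rfl fun i hi => ?_, Finset.sum_const, nsmul_eq_mul]
    rcases hv i with h | h
    · exact absurd h (Finset.mem_filter.1 hi).2
    · rw [h]; norm_num
  have hc : (Finset.univ.filter fun i => x i = 1/2).card
      + (Finset.univ.filter fun i => ¬ x i = 1/2).card = 8 := by
    rw [Finset.card_filter_add_card_filter_not]
    simp
  have hc' : ((Finset.univ.filter fun i => ¬ x i = 1/2).card : ℚ)
      = 8 - ((Finset.univ.filter fun i => x i = 1/2).card : ℚ) := by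
    have := congrArg (fun t : ℕ => (t : ℚ)) hc
    push_cast at this
    linarith
  rw [hA, hB, hc']
  ring

end Aux

section Main

lemma dT_sub (x : Fin 8 → ℚ) (hx : x ∈ deltaTail) :
    IsE8Root x ∧ e8bil x ![1, -1, 0, 0, 0, 0, 0, 0] = 0 ∧
      e8bil x ![0, 1, 1, 2, 0, 0, 0, 0] = 0 := by
  obtain ⟨j, k, hj, hk, hjk, hxj, hxk, h0⟩ := hx
  have hsum8 : ∑ i, x i = x j + x k :=
    Finset.sum_eq_add j k hjk (fun c _ hc => h0 c hc.1 hc.2)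
      (fun h => absurd (Finset.mem_univ j) h) (fun h => absurd (Finset.mem_univ k) h)
  have hsq8 : ∑ i, x i * x i = x j * x j + x k * x k :=
    Finset.sum_eq_add j k hjk (fun c _ hc => by rw [h0 c hc.1 hc.2]; ring)
      (fun h => absurd (Finset.mem_univ j) h) (fun h => absurd (Finset.mem_univ k) h)
  have horth : ∀ v : Fin 8 → ℚ, (∀ i : Fin 8, 4 ≤ i.val → v i = 0) → e8bil x v = 0 := by
    intro v hv
    have : ∑ i, x i * v i = 0 := by
      apply Finset.sum_eq_zero
      intro i _
      by_cases hij : i = j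
      · rw [hij, hv j hj, mul_zero]
      · by_cases hik : i = k
        · rw [hik, hv k hk, mul_zero]
        · rw [h0 i hij hik, zero_mul]
    simp only [e8bil, this, neg_zero]
  refine ⟨⟨⟨Or.inl fun i => ?_, ?_⟩, ?_⟩, horth _ v1_tail, horth _ v2_tail⟩
  · by_cases hij : i = j
    · subst hij
      rcases hxj with h | h
      · exact ⟨1, by rw [h]; norm_num⟩
      · exact ⟨-1, by rw [h]; norm_num⟩
    · by_cases hik : i = k
      · subst hik
        rcases hxk with h | h
        · exact ⟨1, by rw [h]; norm_num⟩
        · exact ⟨-1, by rw [h]; norm_num⟩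
      · exact ⟨0, by rw [h0 i hij hik]; norm_num⟩
  · rcases hxj with h | h <;> rcases hxk with h' | h'
    · exact ⟨1, by rw [hsum8, h, h']; norm_num⟩
    · exact ⟨0, by rw [hsum8, h, h']; norm_num⟩
    · exact ⟨0, by rw [hsum8, h, h']; norm_num⟩
    · exact ⟨-1, by rw [hsum8, h, h']; norm_num⟩
  · simp only [e8bil, hsq8]
    rcases hxj with h | h <;> rcases hxk with h' | h' <;> rw [h, h'] <;> norm_num

lemma hs_sub (x : Fin 8 → ℚ) (hx : x ∈ halfSpecial) :
    IsE8Root x ∧ e8bil x ![1, -1, 0, 0, 0, 0, 0, 0] = 0 ∧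
      e8bil x ![0, 1, 1, 2, 0, 0, 0, 0] = 0 := by
  obtain ⟨hv, heven, h01, h12, h30⟩ := hx
  obtain ⟨q, hq⟩ := heven
  refine ⟨⟨⟨Or.inr fun i => ?_, (q : ℤ) - 2, ?_⟩, ?_⟩, ?_, ?_⟩
  · rcases hv i with h | h
    · exact ⟨0, by rw [h]; norm_num⟩
    · exact ⟨-1, by rw [h]; norm_num⟩
  · rw [sum_half x hv, hq]
    push_cast
    ring
  · have : ∑ i, x i * x i = 2 := by
      have h' : ∀ i ∈ Finset.univ, x i * x i = 1/4 := by
        intro i _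
        rcases hv i with h | h <;> rw [h] <;> norm_num
      rw [Finset.sum_congr rfl h', Finset.sum_const]
      simp only [Finset.card_univ, Fintype.card_fin, nsmul_eq_mul]
      norm_num
    simp only [e8bil, this]
  · simp [e8bil, Fin.sum_univ_eight,
      show (![1,-1,0,0,0,0,0,0] : Fin 8 → ℚ) 5 = 0 from rfl,
      show (![1,-1,0,0,0,0,0,0] : Fin 8 → ℚ) 6 = 0 from rfl,
      show (![1,-1,0,0,0,0,0,0] : Fin 8 → ℚ) 7 = 0 from rfl]
    linarith
  · simp [e8bil, Fin.sum_univ_eight,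
      show (![0,1,1,2,0,0,0,0] : Fin 8 → ℚ) 5 = 0 from rfl,
      show (![0,1,1,2,0,0,0,0] : Fin 8 → ℚ) 6 = 0 from rfl,
      show (![0,1,1,2,0,0,0,0] : Fin 8 → ℚ) 7 = 0 from rfl]
    linarith

end Main

section Forward

lemma forward (x : Fin 8 → ℚ) (hx : IsE8Root x)
    (h1 : e8bil x ![1, -1, 0, 0, 0, 0, 0, 0] = 0)
    (h2 : e8bil x ![0, 1, 1, 2, 0, 0, 0, 0] = 0) :
    x ∈ deltaTail ∪ halfSpecial := by
  obtain ⟨⟨hcoord, m, hsum⟩, hnorm⟩ := hx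
  have h1' : x 0 = x 1 := by
    simp [e8bil, Fin.sum_univ_eight,
      show (![1,-1,0,0,0,0,0,0] : Fin 8 → ℚ) 5 = 0 from rfl,
      show (![1,-1,0,0,0,0,0,0] : Fin 8 → ℚ) 6 = 0 from rfl,
      show (![1,-1,0,0,0,0,0,0] : Fin 8 → ℚ) 7 = 0 from rfl] at h1
    linarith
  have h2' : x 1 + x 2 + 2 * x 3 = 0 := by
    simp [e8bil, Fin.sum_univ_eight,
      show (![0,1,1,2,0,0,0,0] : Fin 8 → ℚ) 5 = 0 from rfl,
      show (![0,1,1,2,0,0,0,0] : Fin 8 → ℚ) 6 = 0 from rfl,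
      show (![0,1,1,2,0,0,0,0] : Fin 8 → ℚ) 7 = 0 from rfl] at h2
    linarith
  have hnorm' : ∑ i, x i * x i = 2 := by
    simp only [e8bil] at hnorm
    linarith
  rcases hcoord with hint | hhalf
  · -- integer case
    left
    choose n hn using hint
    have hb : ∀ i, n i = -1 ∨ n i = 0 ∨ n i = 1 := by
      intro i
      have hle : x i * x i ≤ 2 := by
        have h := Finset.single_le_sum (f := fun i => x i * x i)
          (fun i _ => mul_self_nonneg (x i)) (Finset.mem_univ i)
        rw [hnorm'] at h
        exact h
      rw [hn i] at hle
      have hle' : n i * n i ≤ 2 := by exact_mod_cast hle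
      have hlow : -1 ≤ n i := by nlinarith
      have hhigh : n i ≤ 1 := by nlinarith
      omega
    have e1 : n 0 = n 1 := by
      have h := h1'
      rw [hn 0, hn 1] at h
      exact_mod_cast h
    have e2 : n 1 + n 2 + 2 * n 3 = 0 := by
      have h := h2'
      rw [hn 1, hn 2, hn 3] at h
      exact_mod_cast h
    have hsq : ∑ i, n i * n i = 2 := by
      have h : ((∑ i, n i * n i : ℤ) : ℚ) = 2 := by
        push_cast
        rw [show ∑ i, (n i : ℚ) * (n i : ℚ) = ∑ i, x i * x i from
          Finset.sum_congr rfl fun i _ => by rw [hn i]]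
        exact hnorm'
      exact_mod_cast h
    have hcard : (Finset.univ.filter fun i => n i ≠ 0).card = 2 := by
      have h : ∑ i, n i * n i = ∑ i : Fin 8, (if n i ≠ 0 then (1 : ℤ) else 0) :=
        Finset.sum_congr rfl fun i _ => by rcases hb i with h | h | h <;> simp [h]
      rw [h, Finset.sum_boole] at hsq
      exact_mod_cast hsq
    obtain ⟨j, k, hjk, hset⟩ := Finset.card_eq_two.1 hcard
    have hmem : ∀ i, n i ≠ 0 ↔ (i = j ∨ i = k) := by
      intro i
      constructor
      · intro h
        have hi : i ∈ Finset.univ.filter fun i => n i ≠ 0 := by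
          simp [h]
        rw [hset] at hi
        simpa using hi
      · rintro (rfl | rfl)
        · have : i ∈ Finset.univ.filter fun i => n i ≠ 0 := by
            rw [hset]; simp
          simpa using this
        · have : i ∈ Finset.univ.filter fun i => n i ≠ 0 := by
            rw [hset]; simp
          simpa using this
    have hnj : n j ≠ 0 := (hmem j).2 (Or.inl rfl)
    have hnk : n k ≠ 0 := (hmem k).2 (Or.inr rfl)
    have hzero : ∀ i, i ≠ j → i ≠ k → n i = 0 := by
      intro i hij hik
      by_contra h
      rcases (hmem i).1 h with rfl | rfl
      · exact hij rfl
      · exact hik rfl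
    have hthree : ∀ a b c : Fin 8, a ≠ b → a ≠ c → b ≠ c →
        n a ≠ 0 → n b ≠ 0 → n c ≠ 0 → False := by
      intro a b c hab hac hbc ha hb' hc
      rcases (hmem a).1 ha with rfl | rfl <;> rcases (hmem b).1 hb' with rfl | rfl <;>
        rcases (hmem c).1 hc with rfl | rfl <;> simp_all
    have hn3 : n 3 = 0 := by
      by_contra h3
      have e1' : n 1 ≠ 0 := by
        rcases hb 1 with h | h | h <;> rcases hb 2 with g | g | g <;>
          rcases hb 3 with f | f | f <;> omega
      have e2'' : n 2 ≠ 0 := by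
        rcases hb 1 with h | h | h <;> rcases hb 2 with g | g | g <;>
          rcases hb 3 with f | f | f <;> omega
      exact hthree 1 2 3 (by decide) (by decide) (by decide) e1' e2'' h3
    have hn1 : n 1 = 0 := by
      by_contra hh1
      have h0' : n 0 ≠ 0 := by rw [e1]; exact hh1
      have h2'' : n 2 ≠ 0 := by omega
      exact hthree 0 1 2 (by decide) (by decide) (by decide) h0' hh1 h2''
    have hn0 : n 0 = 0 := by rw [e1]; exact hn1
    have hn2 : n 2 = 0 := by omega
    have hge : ∀ i : Fin 8, n i ≠ 0 → 4 ≤ i.val := by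
      intro i hi
      by_contra h
      push_neg at h
      have hv' : i.val = 0 ∨ i.val = 1 ∨ i.val = 2 ∨ i.val = 3 := by omega
      rcases hv' with h' | h' | h' | h'
      · exact hi (by rw [show i = (0 : Fin 8) from Fin.ext (by rw [h']; rfl)]; exact hn0)
      · exact hi (by rw [show i = (1 : Fin 8) from Fin.ext (by rw [h']; rfl)]; exact hn1)
      · exact hi (by rw [show i = (2 : Fin 8) from Fin.ext (by rw [h']; rfl)]; exact hn2)
      · exact hi (by rw [show i = (3 : Fin 8) from Fin.ext (by rw [h']; rfl)]; exact hn3)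
    refine ⟨j, k, hge j hnj, hge k hnk, hjk, ?_, ?_, ?_⟩
    · rcases hb j with h | h | h
      · right; rw [hn j, h]; norm_num
      · exact absurd h hnj
      · left; rw [hn j, h]; norm_num
    · rcases hb k with h | h | h
      · right; rw [hn k, h]; norm_num
      · exact absurd h hnk
      · left; rw [hn k, h]; norm_num
    · intro i hij hik
      rw [hn i, hzero i hij hik]
      norm_num
  · -- half-integer case
    right
    choose n hn using hhalf
    have hk1 : ∀ i, (2 * n i + 1) * (2 * n i + 1) = 1 := by
      have hs8 : ∑ i, (2 * n i + 1) * (2 * n i + 1) = 8 := by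
        have h : ((∑ i, (2 * n i + 1) * (2 * n i + 1) : ℤ) : ℚ) = 8 := by
          push_cast
          rw [show ∑ i, ((2 * (n i : ℚ) + 1) * (2 * (n i : ℚ) + 1))
              = ∑ i, 4 * (x i * x i) from
            Finset.sum_congr rfl fun i _ => by rw [hn i]; ring]
          rw [← Finset.mul_sum, hnorm']
          norm_num
        exact_mod_cast h
      have hpos : ∀ i ∈ Finset.univ, (0 : ℤ) ≤ (2 * n i + 1) * (2 * n i + 1) - 1 := by
        intro i _
        have h' : 2 * n i + 1 ≤ -1 ∨ 1 ≤ 2 * n i + 1 := by omega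
        rcases h' with h' | h' <;> nlinarith
      have hz : ∑ i, ((2 * n i + 1) * (2 * n i + 1) - 1) = 0 := by
        rw [Finset.sum_sub_distrib, hs8]
        simp
      intro i
      have h := (Finset.sum_eq_zero_iff_of_nonneg hpos).1 hz i (Finset.mem_univ i)
      omega
    have hv : ∀ i, x i = 1/2 ∨ x i = -1/2 := by
      intro i
      rcases mul_self_eq_one_iff.1 (hk1 i) with h | h
      · left
        have hni : n i = 0 := by omega
        rw [hn i, hni]; norm_num
      · right
        have hni : n i = -1 := by omega
        rw [hn i, hni]; norm_num
    have heven : Even (Finset.univ.filter fun i => x i = 1/2).card := by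
      have hs := sum_half x hv
      rw [hsum] at hs
      have h : ((Finset.univ.filter fun i => x i = 1/2).card : ℚ) = 2 * m + 4 := by
        linarith
      have h' : ((Finset.univ.filter fun i => x i = 1/2).card : ℤ) = 2 * m + 4 := by
        exact_mod_cast h
      exact ⟨(m + 2).toNat, by omega⟩
    have h30 : x 0 = x 1 ∧ x 1 = x 2 ∧ x 3 = -x 0 := by
      rcases hv 0 with h | h <;> rcases hv 1 with g | g <;> rcases hv 2 with f | f <;>
        rcases hv 3 with e | e <;>
        exact ⟨by linarith, by linarith, by linarith⟩
    exact ⟨hv, heven, h30.1, h30.2.1, h30.2.2⟩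

end Forward

/-- The roots of `E₈` orthogonal to `v₁ = (1,-1,0,…,0)` and
`v₂ = (0,1,1,2,0,…,0)` are exactly the 24 vectors `δ_{±i,±j}` with `i,j ≥ 5`
together with the 16 vectors `±δ'_S` with `1,2,3 ∈ S`, `4 ∉ S`, `|S|` even:
40 roots in total. -/
theorem e8_roots_orthogonal_v1_v2 :
    {x : Fin 8 → ℚ | IsE8Root x ∧
        e8bil x ![1, -1, 0, 0, 0, 0, 0, 0] = 0 ∧
        e8bil x ![0, 1, 1, 2, 0, 0, 0, 0] = 0} = deltaTail ∪ halfSpecial ∧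
    deltaTail.ncard = 24 ∧ halfSpecial.ncard = 16 ∧
    {x : Fin 8 → ℚ | IsE8Root x ∧
        e8bil x ![1, -1, 0, 0, 0, 0, 0, 0] = 0 ∧
        e8bil x ![0, 1, 1, 2, 0, 0, 0, 0] = 0}.ncard = 40 := by
  have hmain : {x : Fin 8 → ℚ | IsE8Root x ∧
      e8bil x ![1, -1, 0, 0, 0, 0, 0, 0] = 0 ∧
      e8bil x ![0, 1, 1, 2, 0, 0, 0, 0] = 0} = deltaTail ∪ halfSpecial := by
    ext x
    constructor
    · rintro ⟨hroot, h1, h2⟩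
      exact forward x hroot h1 h2
    · rintro (hx | hx)
      · exact dT_sub x hx
      · exact hs_sub x hx
  have hd : deltaTail.ncard = 24 := by
    rw [deltaTail_eq, Set.ncard_coe_finset, F1card]
  have hh : halfSpecial.ncard = 16 := by
    rw [halfSpecial_eq, Set.ncard_coe_finset, F2card]
  have hdisj : Disjoint deltaTail halfSpecial := by
    rw [Set.disjoint_left]
    rintro x ⟨j, k, hj, hk, hjk, _, _, h0⟩ ⟨hv, -, -, -⟩
    have h00 : x 0 = 0 :=
      h0 0 (Fin.ne_of_val_ne (by omega)) (Fin.ne_of_val_ne (by omega))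
    rcases hv 0 with h | h <;> rw [h00] at h <;> norm_num at h
  have hfin1 : deltaTail.Finite := by
    rw [deltaTail_eq]; exact F1.finite_toSet
  have hfin2 : halfSpecial.Finite := by
    rw [halfSpecial_eq]; exact F2.finite_toSet
  refine ⟨hmain, hd, hh, ?_⟩
  rw [hmain, Set.ncard_union_eq hdisj hfin1 hfin2, hd, hh]
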